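/- Let n ≥ 3, let G = K_{n,n} be the complete bipartite graph with parts V₁ and V₂ each of size n, and let G' be obtained from G by adding one edge {x,y} between two distinct vertices x, y ∈ V₁. Then λ(G', K₂) < 1, where K₂ is the complete graph on two vertices; in particular, λ(G', K₂) < λ(G, K₂) = 1, so adding an edge can strictly decrease λ(·, K₂). -/
import Mathlib


open scoped Classical
open Finset

/-- Degree of a vertex in a finite simple graph. -/
noncomputable def gdeg {V : Type*} [Fintype V] (G : SimpleGraph V) (v : V) : ℕ :=
  (G.neighborSet v).ncard

/-- The volume of a finite simple graph: the sum of the degrees of all vertices. -/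
noncomputable def gvol {V : Type*} [Fintype V] (G : SimpleGraph V) : ℕ :=
  ∑ v, gdeg G v

/-- The Rayleigh-type quotient `R_f(G, X)` for an embedding `f : V(G) → X` where `X`
carries a distance function `d`.  The sum over ordered pairs of adjacent vertices divided
by `2` is the sum over edges of `G`; the sum over ordered pairs of distinct vertices divided
by `2` is the sum over unordered pairs of distinct vertices of `G`. -/
noncomputable def Rf {V X : Type*} [Fintype V] (G : SimpleGraph V) (d : X → X → ℝ)
    (f : V → X) : ℝ :=
  ((gvol G : ℝ) * ((∑ u, ∑ v, if G.Adj u v then d (f u) (f v) ^ 2 else 0) / 2)) /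
    ((∑ u, ∑ v, if u ≠ v then d (f u) (f v) ^ 2 * (gdeg G u : ℝ) * (gdeg G v : ℝ) else 0) / 2)

/-- `lam G d` is `λ(G, X)`: the infimum of `R_f(G, X)` over nonconstant `f : V(G) → X`. -/
noncomputable def lam {V X : Type*} [Fintype V] (G : SimpleGraph V) (d : X → X → ℝ) : ℝ :=
  sInf {r | ∃ f : V → X, (∃ u v, f u ≠ f v) ∧ r = Rf G d f}

/-- The diameter of a finite simple graph: the maximum shortest-path distance over pairs. -/
noncomputable def gDiam {V : Type*} [Fintype V] (H : SimpleGraph V) : ℕ :=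
  Finset.univ.sup fun p : V × V => H.dist p.1 p.2

/-- The maximum degree of a finite simple graph. -/
noncomputable def gMaxDeg {V : Type*} [Fintype V] (G : SimpleGraph V) : ℕ :=
  Finset.univ.sup (gdeg G)

/-- The minimum degree of a finite simple graph. -/
noncomputable def gMinDeg {V : Type*} [Fintype V] (G : SimpleGraph V) : ℕ :=
  sInf (Set.range (gdeg G))

noncomputable def chi (c : Fin 2) : ℝ := if c = 0 then 1 else 0
lemma chi_sq (c : Fin 2) : chi c ^ 2 = chi c := by unfold chi; split_ifs <;> norm_num
lemma chi_nonneg (c : Fin 2) : 0 ≤ chi c := by unfold chi; split_ifs <;> norm_num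
lemma chi_le_one (c : Fin 2) : chi c ≤ 1 := by unfold chi; split_ifs <;> norm_num
lemma dist_sq (a b : Fin 2) :
    ((⊤ : SimpleGraph (Fin 2)).dist a b : ℝ) ^ 2 = (chi a - chi b) ^ 2 := by
  by_cases h : a = b
  · subst h; simp [SimpleGraph.dist_self]
  · rw [SimpleGraph.dist_eq_one_iff_adj.mpr (by simpa using h)]
    have : chi a - chi b = 1 ∨ chi a - chi b = -1 := by
      unfold chi
      rcases Fin.exists_fin_two.mp ⟨a, rfl⟩ with h1 | h1 <;>
        rcases Fin.exists_fin_two.mp ⟨b, rfl⟩ with h2 | h2 <;> simp_all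
    rcases this with h1 | h1 <;> rw [h1] <;> norm_num

lemma prodSum {V : Type*} [Fintype V] (F G : V → ℝ) :
    ∑ u, ∑ v, F u * G v = (∑ u, F u) * (∑ v, G v) := by
  rw [Finset.sum_mul_sum]

lemma sumLR {k : ℕ} (α β : Fin k → ℝ) :
    ∑ a, ∑ b, (α a - β b) ^ 2
      = k * (∑ a, (α a) ^ 2) + k * (∑ b, (β b) ^ 2)
        - 2 * ((∑ a, α a) * (∑ b, β b)) := by
  have e1 : ∀ a b, (α a - β b) ^ 2
      = (α a) ^ 2 * 1 + 1 * (β b) ^ 2 - (2 * α a) * β b := by intros; ring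
  simp only [e1, Finset.sum_add_distrib, Finset.sum_sub_distrib, ← Finset.mul_sum,
    ← Finset.sum_mul]
  simp only [Finset.sum_const, Finset.card_univ, Fintype.card_fin, nsmul_eq_mul, mul_one]
  ring

lemma sumD {V : Type*} [Fintype V] (g d : V → ℝ) :
    ∑ u, ∑ v, (g u - g v) ^ 2 * d u * d v
      = 2 * (∑ v, d v) * (∑ v, (g v) ^ 2 * d v) - 2 * (∑ v, g v * d v) ^ 2 := by
  have e1 : ∀ u v, (g u - g v) ^ 2 * d u * d v
      = ((g u) ^ 2 * d u) * d v + d u * ((g v) ^ 2 * d v)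
        - (2 * (g u * d u)) * (g v * d v) := by intros; ring
  simp only [e1, Finset.sum_add_distrib, Finset.sum_sub_distrib, ← Finset.mul_sum,
    ← Finset.sum_mul]
  ring

lemma den_eq {V : Type*} [Fintype V] (G : SimpleGraph V) (f : V → Fin 2) :
    (∑ u, ∑ v, if u ≠ v then ((⊤ : SimpleGraph (Fin 2)).dist (f u) (f v) : ℝ) ^ 2
        * (gdeg G u : ℝ) * (gdeg G v : ℝ) else 0)
      = 2 * ((∑ v, (gdeg G v : ℝ)) * (∑ v, chi (f v) * (gdeg G v : ℝ)))
        - 2 * (∑ v, chi (f v) * (gdeg G v : ℝ)) ^ 2 := by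
  have key : ∀ u v : V, (if u ≠ v then ((⊤ : SimpleGraph (Fin 2)).dist (f u) (f v) : ℝ) ^ 2
      * (gdeg G u : ℝ) * (gdeg G v : ℝ) else 0)
      = (chi (f u) - chi (f v)) ^ 2 * (gdeg G u : ℝ) * (gdeg G v : ℝ) := by
    intro u v
    by_cases h : u = v
    · subst h; simp
    · rw [if_pos h, dist_sq]
  simp only [key]
  rw [sumD (fun v => chi (f v)) (fun v => (gdeg G v : ℝ))]
  have : ∀ v : V, (chi (f v)) ^ 2 * (gdeg G v : ℝ) = chi (f v) * (gdeg G v : ℝ) := by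
    intro v; rw [chi_sq]
  simp only [this]
  ring

lemma num_cb {n : ℕ} (f : Fin n ⊕ Fin n → Fin 2) :
    (∑ u, ∑ v, if (completeBipartiteGraph (Fin n) (Fin n)).Adj u v
        then ((⊤ : SimpleGraph (Fin 2)).dist (f u) (f v) : ℝ) ^ 2 else 0)
      = 2 * ((n : ℝ) * (∑ a, chi (f (Sum.inl a))) + (n : ℝ) * (∑ a, chi (f (Sum.inr a)))
          - 2 * ((∑ a, chi (f (Sum.inl a))) * (∑ a, chi (f (Sum.inr a))))) := by
  rw [Fintype.sum_sum_type]
  simp only [Fintype.sum_sum_type]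
  simp only [completeBipartiteGraph_adj, Sum.isLeft_inl, Sum.isRight_inl, Sum.isLeft_inr,
    Sum.isRight_inr, Bool.false_eq_true, true_and, and_true, false_and, and_false,
    or_false, false_or, or_self, true_or, or_true, if_true, if_false,
    Finset.sum_const_zero, dist_sq, zero_add, add_zero]
  rw [sumLR (fun a => chi (f (Sum.inl a))) (fun b => chi (f (Sum.inr b))),
    sumLR (fun b => chi (f (Sum.inr b))) (fun a => chi (f (Sum.inl a)))]
  simp only [chi_sq]
  ring

lemma ncard_range_inr (n : ℕ) : (Set.range (Sum.inr : Fin n → Fin n ⊕ Fin n)).ncard = n := by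
  rw [← Set.image_univ, Set.ncard_image_of_injective _ Sum.inr_injective, Set.ncard_univ]; simp
lemma ncard_range_inl (n : ℕ) : (Set.range (Sum.inl : Fin n → Fin n ⊕ Fin n)).ncard = n := by
  rw [← Set.image_univ, Set.ncard_image_of_injective _ Sum.inl_injective, Set.ncard_univ]; simp

lemma gdeg_cb (n : ℕ) (v : Fin n ⊕ Fin n) :
    gdeg (completeBipartiteGraph (Fin n) (Fin n)) v = n := by
  cases v with
  | inl a =>
      have : (completeBipartiteGraph (Fin n) (Fin n)).neighborSet (Sum.inl a)
          = Set.range Sum.inr := by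
        ext w; cases w <;> simp [SimpleGraph.neighborSet]
      rw [gdeg, this, ncard_range_inr]
  | inr a =>
      have : (completeBipartiteGraph (Fin n) (Fin n)).neighborSet (Sum.inr a)
          = Set.range Sum.inl := by
        ext w; cases w <;> simp [SimpleGraph.neighborSet]
      rw [gdeg, this, ncard_range_inl]

section Gp
variable {n : ℕ} {x y : Fin n}

lemma gdeg_G'_inr (b : Fin n) :
    gdeg (completeBipartiteGraph (Fin n) (Fin n) ⊔
      SimpleGraph.fromEdgeSet {s(Sum.inl x, Sum.inl y)}) (Sum.inr b) = n := by
  have : (completeBipartiteGraph (Fin n) (Fin n) ⊔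
      SimpleGraph.fromEdgeSet {s(Sum.inl x, Sum.inl y)}).neighborSet (Sum.inr b)
      = Set.range Sum.inl := by
    ext w; cases w <;> simp [SimpleGraph.neighborSet, SimpleGraph.fromEdgeSet_adj, Sym2.eq_iff]
  rw [gdeg, this, ncard_range_inl]

lemma gdeg_G'_inl (hxy : x ≠ y) (a : Fin n) :
    gdeg (completeBipartiteGraph (Fin n) (Fin n) ⊔
      SimpleGraph.fromEdgeSet {s(Sum.inl x, Sum.inl y)}) (Sum.inl a)
      = n + (if a = x ∨ a = y then 1 else 0) := by
  by_cases hax : a = x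
  · subst hax
    have hN : (completeBipartiteGraph (Fin n) (Fin n) ⊔
        SimpleGraph.fromEdgeSet {s(Sum.inl a, Sum.inl y)}).neighborSet (Sum.inl a)
        = insert (Sum.inl y) (Set.range Sum.inr) := by
      ext w
      cases w with
      | inl c =>
          simp [SimpleGraph.neighborSet, SimpleGraph.fromEdgeSet_adj, Sym2.eq_iff]
          aesop
      | inr c => simp [SimpleGraph.neighborSet]
    rw [gdeg, hN, Set.ncard_insert_of_notMem (by simp), ncard_range_inr]
    simp
  · by_cases hay : a = y
    · subst hay
      have hN : (completeBipartiteGraph (Fin n) (Fin n) ⊔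
          SimpleGraph.fromEdgeSet {s(Sum.inl x, Sum.inl a)}).neighborSet (Sum.inl a)
          = insert (Sum.inl x) (Set.range Sum.inr) := by
        ext w
        cases w with
        | inl c =>
            simp [SimpleGraph.neighborSet, SimpleGraph.fromEdgeSet_adj, Sym2.eq_iff]
            aesop
        | inr c => simp [SimpleGraph.neighborSet]
      rw [gdeg, hN, Set.ncard_insert_of_notMem (by simp), ncard_range_inr]
      simp
    · have hN : (completeBipartiteGraph (Fin n) (Fin n) ⊔
          SimpleGraph.fromEdgeSet {s(Sum.inl x, Sum.inl y)}).neighborSet (Sum.inl a)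
          = Set.range Sum.inr := by
        ext w
        cases w with
        | inl c =>
            simp [SimpleGraph.neighborSet, SimpleGraph.fromEdgeSet_adj, Sym2.eq_iff]
            aesop
        | inr c => simp [SimpleGraph.neighborSet]
      rw [gdeg, hN, ncard_range_inr]
      simp [hax, hay]

lemma sum_ite_or (hxy : x ≠ y) :
    (∑ a : Fin n, if a = x ∨ a = y then (1 : ℝ) else 0) = 2 := by
  have : ∀ a : Fin n, (if a = x ∨ a = y then (1 : ℝ) else 0)
      = (if a = x then 1 else 0) + (if a = y then 1 else 0) := by
    intro a; by_cases h1 : a = x <;> by_cases h2 : a = y <;> simp_all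
  simp only [this, Finset.sum_add_distrib, Finset.sum_ite_eq', Finset.mem_univ, if_true]
  norm_num

lemma sum_ite_or_nat (hxy : x ≠ y) :
    (∑ a : Fin n, if a = x ∨ a = y then (1 : ℕ) else 0) = 2 := by
  have : ∀ a : Fin n, (if a = x ∨ a = y then (1 : ℕ) else 0)
      = (if a = x then 1 else 0) + (if a = y then 1 else 0) := by
    intro a; by_cases h1 : a = x <;> by_cases h2 : a = y <;> simp_all
  simp only [this, Finset.sum_add_distrib, Finset.sum_ite_eq', Finset.mem_univ, if_true]

lemma gvol_cb : gvol (completeBipartiteGraph (Fin n) (Fin n)) = 2 * n * n := by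
  simp only [gvol, gdeg_cb, Finset.sum_const, Finset.card_univ, smul_eq_mul]
  rw [Fintype.card_sum, Fintype.card_fin]
  ring

lemma gvol_G' (hxy : x ≠ y) :
    gvol (completeBipartiteGraph (Fin n) (Fin n) ⊔
        SimpleGraph.fromEdgeSet {s(Sum.inl x, Sum.inl y)}) = 2 * n * n + 2 := by
  rw [gvol, Fintype.sum_sum_type]
  simp only [gdeg_G'_inl hxy, gdeg_G'_inr, Finset.sum_add_distrib, Finset.sum_const,
    Finset.card_univ, Fintype.card_fin, smul_eq_mul, sum_ite_or_nat hxy]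
  ring

end Gp

lemma calc_aux (C M P Q : ℝ) : (C * (2 * M / 2)) / ((2 * P - 2 * Q) / 2) = (C * M) / (P - Q) := by
  have h1 : 2 * M / 2 = M := by ring
  have h2 : (2 * P - 2 * Q) / 2 = P - Q := by ring
  rw [h1, h2]

lemma Rf_cb {n : ℕ} (f : Fin n ⊕ Fin n → Fin 2) (A B : ℝ)
    (hA : A = ∑ a, chi (f (Sum.inl a))) (hB : B = ∑ a, chi (f (Sum.inr a))) :
    Rf (completeBipartiteGraph (Fin n) (Fin n))
        (fun a b : Fin 2 => ((⊤ : SimpleGraph (Fin 2)).dist a b : ℝ)) f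
      = ((2 * n * n : ℝ) * ((n : ℝ) * A + (n : ℝ) * B - 2 * (A * B)))
        / ((2 * n * n : ℝ) * ((n : ℝ) * (A + B)) - ((n : ℝ) * (A + B)) ^ 2) := by
  unfold Rf
  rw [num_cb, den_eq, calc_aux]
  have h1 : (∑ v : Fin n ⊕ Fin n, (gdeg (completeBipartiteGraph (Fin n) (Fin n)) v : ℝ))
      = 2 * (n : ℝ) * (n : ℝ) := by
    simp only [gdeg_cb]
    rw [Finset.sum_const, Finset.card_univ, Fintype.card_sum, Fintype.card_fin]
    push_cast; ring
  have h2 : (∑ v, chi (f v) * (gdeg (completeBipartiteGraph (Fin n) (Fin n)) v : ℝ))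
      = (n : ℝ) * (A + B) := by
    simp only [gdeg_cb]
    rw [Fintype.sum_sum_type, ← Finset.sum_mul, ← Finset.sum_mul, hA, hB]
    ring
  rw [h1, h2, gvol_cb, hA, hB]
  push_cast
  ring_nf

-- part 3
noncomputable def f0 {n : ℕ} (x y : Fin n) : Fin n ⊕ Fin n → Fin 2 :=
  Sum.elim (fun v => if v = x ∨ v = y then 0 else 1) (fun v => if v = x ∨ v = y then 0 else 1)

section Gp2
variable {n : ℕ} {x y : Fin n}

lemma chi_f0l (v : Fin n) :
    chi (f0 x y (Sum.inl v)) = if v = x ∨ v = y then (1 : ℝ) else 0 := by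
  simp only [f0, Sum.elim_inl, chi]
  split_ifs <;> simp_all

lemma chi_f0r (v : Fin n) :
    chi (f0 x y (Sum.inr v)) = if v = x ∨ v = y then (1 : ℝ) else 0 := by
  simp only [f0, Sum.elim_inr, chi]
  split_ifs <;> simp_all

lemma ite_or_sq (v : Fin n) :
    ((if v = x ∨ v = y then (1 : ℝ) else 0)) ^ 2 = (if v = x ∨ v = y then (1 : ℝ) else 0) := by
  split_ifs <;> norm_num

lemma num_G' (G : SimpleGraph (Fin n ⊕ Fin n)) (hxy : x ≠ y)
    (hG : G = completeBipartiteGraph (Fin n) (Fin n) ⊔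
        SimpleGraph.fromEdgeSet {s(Sum.inl x, Sum.inl y)}) :
    (∑ u, ∑ v, if G.Adj u v
        then ((⊤ : SimpleGraph (Fin 2)).dist (f0 x y u) (f0 x y v) : ℝ) ^ 2 else 0)
      = 2 * (4 * (n : ℝ) - 8) := by
  rw [Fintype.sum_sum_type]
  simp only [Fintype.sum_sum_type]
  rw [Finset.sum_add_distrib, Finset.sum_add_distrib]
  have hLL : (∑ a : Fin n, ∑ b : Fin n,
      if G.Adj (Sum.inl a) (Sum.inl b)
        then ((⊤ : SimpleGraph (Fin 2)).dist (f0 x y (Sum.inl a)) (f0 x y (Sum.inl b)) : ℝ) ^ 2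
        else 0) = 0 := by
    apply Finset.sum_eq_zero; intro a _
    apply Finset.sum_eq_zero; intro b _
    split_ifs with h
    · rw [hG] at h
      have hc : (a = x ∧ b = y) ∨ (a = y ∧ b = x) := by
        rcases h with h | h
        · simp at h
        · rw [SimpleGraph.fromEdgeSet_adj] at h
          obtain ⟨hm, -⟩ := h
          simp only [Set.mem_singleton_iff, Sym2.eq_iff, Sum.inl.injEq] at hm
          exact hm
      have h1 : f0 x y (Sum.inl a) = 0 := by
        rcases hc with ⟨rfl, rfl⟩ | ⟨rfl, rfl⟩ <;> simp [f0]
      have h2 : f0 x y (Sum.inl b) = 0 := by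
        rcases hc with ⟨rfl, rfl⟩ | ⟨rfl, rfl⟩ <;> simp [f0]
      rw [h1, h2, SimpleGraph.dist_self]
      norm_num
    · rfl
  have hRR : (∑ a : Fin n, ∑ b : Fin n,
      if G.Adj (Sum.inr a) (Sum.inr b)
        then ((⊤ : SimpleGraph (Fin 2)).dist (f0 x y (Sum.inr a)) (f0 x y (Sum.inr b)) : ℝ) ^ 2
        else 0) = 0 := by
    apply Finset.sum_eq_zero; intro a _
    apply Finset.sum_eq_zero; intro b _
    rw [if_neg]
    rw [hG]
    rintro (h | h)
    · simp at h
    · rw [SimpleGraph.fromEdgeSet_adj] at h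
      obtain ⟨hm, -⟩ := h
      simp [Sym2.eq_iff] at hm
  have hAdjLR : ∀ a b : Fin n, G.Adj (Sum.inl a) (Sum.inr b) :=
    fun a b => by rw [hG]; exact Or.inl (by simp)
  have hAdjRL : ∀ a b : Fin n, G.Adj (Sum.inr a) (Sum.inl b) :=
    fun a b => by rw [hG]; exact Or.inl (by simp)
  have hLR : (∑ a : Fin n, ∑ b : Fin n,
      if G.Adj (Sum.inl a) (Sum.inr b)
        then ((⊤ : SimpleGraph (Fin 2)).dist (f0 x y (Sum.inl a)) (f0 x y (Sum.inr b)) : ℝ) ^ 2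
        else 0) = 4 * (n : ℝ) - 8 := by
    simp only [hAdjLR, if_true, dist_sq, chi_f0l, chi_f0r]
    rw [sumLR (fun a : Fin n => if a = x ∨ a = y then (1 : ℝ) else 0)
      (fun a : Fin n => if a = x ∨ a = y then (1 : ℝ) else 0)]
    simp only [ite_or_sq, sum_ite_or hxy]
    ring
  have hRL : (∑ a : Fin n, ∑ b : Fin n,
      if G.Adj (Sum.inr a) (Sum.inl b)
        then ((⊤ : SimpleGraph (Fin 2)).dist (f0 x y (Sum.inr a)) (f0 x y (Sum.inl b)) : ℝ) ^ 2
        else 0) = 4 * (n : ℝ) - 8 := by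
    simp only [hAdjRL, if_true, dist_sq, chi_f0l, chi_f0r]
    rw [sumLR (fun a : Fin n => if a = x ∨ a = y then (1 : ℝ) else 0)
      (fun a : Fin n => if a = x ∨ a = y then (1 : ℝ) else 0)]
    simp only [ite_or_sq, sum_ite_or hxy]
    ring
  rw [hLL, hRR, hLR, hRL]
  ring

lemma sum_deg_G' (G : SimpleGraph (Fin n ⊕ Fin n)) (hxy : x ≠ y)
    (hG : G = completeBipartiteGraph (Fin n) (Fin n) ⊔
        SimpleGraph.fromEdgeSet {s(Sum.inl x, Sum.inl y)}) :
    (∑ v : Fin n ⊕ Fin n, (gdeg G v : ℝ)) = 2 * (n : ℝ) * (n : ℝ) + 2 := by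
  have h : (∑ v : Fin n ⊕ Fin n, (gdeg G v : ℝ)) = ((gvol G : ℕ) : ℝ) := by
    rw [gvol]; push_cast; rfl
  rw [h, hG, gvol_G' hxy]
  push_cast; ring

lemma m_G' (G : SimpleGraph (Fin n ⊕ Fin n)) (hxy : x ≠ y)
    (hG : G = completeBipartiteGraph (Fin n) (Fin n) ⊔
        SimpleGraph.fromEdgeSet {s(Sum.inl x, Sum.inl y)}) :
    (∑ v, chi (f0 x y v) * (gdeg G v : ℝ)) = 4 * (n : ℝ) + 2 := by
  rw [Fintype.sum_sum_type]
  simp only [hG, chi_f0l, chi_f0r, gdeg_G'_inl hxy, gdeg_G'_inr]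
  have key : ∀ v : Fin n, (if v = x ∨ v = y then (1 : ℝ) else 0)
      * ((n + if v = x ∨ v = y then 1 else 0 : ℕ) : ℝ)
      = (n : ℝ) * (if v = x ∨ v = y then (1 : ℝ) else 0)
        + (if v = x ∨ v = y then (1 : ℝ) else 0) := by
    intro v; split_ifs <;> push_cast <;> ring
  simp only [key, Finset.sum_add_distrib, ← Finset.mul_sum, ← Finset.sum_mul,
    sum_ite_or hxy]
  ring

end Gp2

-- part 4
lemma Rf_nonneg {V : Type*} [Fintype V] (G : SimpleGraph V) (f : V → Fin 2) :
    0 ≤ Rf G (fun a b : Fin 2 => ((⊤ : SimpleGraph (Fin 2)).dist a b : ℝ)) f := by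
  unfold Rf
  apply div_nonneg
  · apply mul_nonneg (Nat.cast_nonneg _)
    apply div_nonneg _ (by norm_num : (0:ℝ) ≤ 2)
    apply Finset.sum_nonneg; intro u _
    apply Finset.sum_nonneg; intro v _
    split_ifs <;> positivity
  · apply div_nonneg _ (by norm_num : (0:ℝ) ≤ 2)
    apply Finset.sum_nonneg; intro u _
    apply Finset.sum_nonneg; intro v _
    split_ifs <;> positivity

section Gp3
variable {n : ℕ} {x y : Fin n}

lemma Rf_G'_lt_one (G : SimpleGraph (Fin n ⊕ Fin n)) (hn : 3 ≤ n) (hxy : x ≠ y)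
    (hG : G = completeBipartiteGraph (Fin n) (Fin n) ⊔
        SimpleGraph.fromEdgeSet {s(Sum.inl x, Sum.inl y)}) :
    Rf G (fun a b : Fin 2 => ((⊤ : SimpleGraph (Fin 2)).dist a b : ℝ)) (f0 x y) < 1 := by
  unfold Rf
  beta_reduce
  rw [num_G' G hxy hG, den_eq, sum_deg_G' G hxy hG, m_G' G hxy hG, hG, gvol_G' hxy]
  have hN : (3 : ℝ) ≤ (n : ℝ) := by exact_mod_cast hn
  push_cast
  have hpos : (0:ℝ) < (2 * ((2 * (n:ℝ) * (n:ℝ) + 2) * (4 * (n:ℝ) + 2))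
      - 2 * (4 * (n:ℝ) + 2) ^ 2) / 2 := by
    nlinarith [mul_nonneg (sub_nonneg.2 hN) (sub_nonneg.2 hN),
      mul_nonneg (mul_nonneg (sub_nonneg.2 hN) (sub_nonneg.2 hN)) (sub_nonneg.2 hN)]
  rw [div_lt_one hpos]
  nlinarith [sq_nonneg ((n:ℝ) - 2), mul_nonneg (sub_nonneg.2 hN) (sub_nonneg.2 hN)]

lemma Rf_cb_ge (hn : 3 ≤ n) (f : Fin n ⊕ Fin n → Fin 2) (hf : ∃ u v, f u ≠ f v) :
    1 ≤ Rf (completeBipartiteGraph (Fin n) (Fin n))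
      (fun a b : Fin 2 => ((⊤ : SimpleGraph (Fin 2)).dist a b : ℝ)) f := by
  set A := ∑ a, chi (f (Sum.inl a)) with hA
  set B := ∑ a, chi (f (Sum.inr a)) with hB
  rw [Rf_cb f A B hA hB]
  obtain ⟨u, v, huv⟩ := hf
  have hvals : (f u).val ≠ (f v).val := fun h => huv (Fin.ext h)
  have hu2 : (f u).val < 2 := (f u).isLt
  have hv2 : (f v).val < 2 := (f v).isLt
  have hex : ∃ w z : Fin n ⊕ Fin n, f w = 0 ∧ f z = 1 := by
    have h0 : (f u).val = 0 ∧ (f v).val = 1 ∨ (f u).val = 1 ∧ (f v).val = 0 := by omega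
    rcases h0 with ⟨h1, h2⟩ | ⟨h1, h2⟩
    · exact ⟨u, v, Fin.ext h1, Fin.ext h2⟩
    · exact ⟨v, u, Fin.ext h2, Fin.ext h1⟩
  obtain ⟨w, z, hw, hz⟩ := hex
  have hTot : A + B = ∑ v : Fin n ⊕ Fin n, chi (f v) := by
    rw [Fintype.sum_sum_type, hA, hB]
  have h1' : 1 ≤ A + B := by
    rw [hTot]
    have hle := Finset.single_le_sum (f := fun v => chi (f v))
      (fun i _ => chi_nonneg (f i)) (Finset.mem_univ w)
    have : chi (f w) = 1 := by rw [hw]; simp [chi]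
    linarith
  have h2' : A + B ≤ 2 * (n : ℝ) - 1 := by
    have hsum : ∑ v : Fin n ⊕ Fin n, (1 - chi (f v)) = 2 * (n : ℝ) - (A + B) := by
      rw [Finset.sum_sub_distrib, Finset.sum_const, Finset.card_univ, Fintype.card_sum,
        Fintype.card_fin, hTot]
      push_cast; ring
    have hone : (1:ℝ) ≤ ∑ v : Fin n ⊕ Fin n, (1 - chi (f v)) := by
      have hle := Finset.single_le_sum (f := fun v => 1 - chi (f v))
        (fun i _ => by show (0:ℝ) ≤ 1 - chi (f i); linarith [chi_le_one (f i)])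
        (Finset.mem_univ z)
      have : chi (f z) = 0 := by
        rw [hz]; unfold chi; rw [if_neg]; exact (by decide : (1 : Fin 2) ≠ 0)
      simp only [this] at hle
      linarith
    linarith [hsum ▸ hone]
  have hN : (3:ℝ) ≤ (n:ℝ) := by exact_mod_cast hn
  have hden : (0:ℝ) < (2 * (n:ℝ) * (n:ℝ)) * ((n:ℝ) * (A + B)) - ((n:ℝ) * (A + B)) ^ 2 := by
    have heq : (2 * (n:ℝ) * (n:ℝ)) * ((n:ℝ) * (A + B)) - ((n:ℝ) * (A + B)) ^ 2
        = (n:ℝ) ^ 2 * (A + B) * (2 * (n:ℝ) - (A + B)) := by ring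
    rw [heq]
    have p1 : (0:ℝ) < (n:ℝ) ^ 2 := by nlinarith
    have p2 : (0:ℝ) < A + B := by linarith
    have p3 : (0:ℝ) < 2 * (n:ℝ) - (A + B) := by linarith
    exact mul_pos (mul_pos p1 p2) p3
  rw [le_div_iff₀ hden, one_mul]
  nlinarith [sq_nonneg ((n:ℝ) * (A - B))]

lemma Rf_cb_f0 (hn : 3 ≤ n) (hxy : x ≠ y) :
    Rf (completeBipartiteGraph (Fin n) (Fin n))
      (fun a b : Fin 2 => ((⊤ : SimpleGraph (Fin 2)).dist a b : ℝ)) (f0 x y) = 1 := by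
  have hA : (2:ℝ) = ∑ a, chi (f0 x y (Sum.inl a)) := by
    simp only [chi_f0l]; rw [sum_ite_or hxy]
  have hB : (2:ℝ) = ∑ a, chi (f0 x y (Sum.inr a)) := by
    simp only [chi_f0r]; rw [sum_ite_or hxy]
  rw [Rf_cb (f0 x y) 2 2 hA hB]
  have hN : (3:ℝ) ≤ (n:ℝ) := by exact_mod_cast hn
  have hden0 : (2 * (n:ℝ) * (n:ℝ)) * ((n:ℝ) * ((2:ℝ) + 2)) - ((n:ℝ) * ((2:ℝ) + 2)) ^ 2 ≠ 0 := by
    nlinarith [mul_nonneg (sub_nonneg.2 hN) (sub_nonneg.2 hN),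
      mul_nonneg (mul_nonneg (sub_nonneg.2 hN) (sub_nonneg.2 hN)) (sub_nonneg.2 hN)]
  rw [div_eq_one_iff_eq hden0]
  ring

lemma exists_z (hn : 3 ≤ n) (hxy : x ≠ y) : ∃ z : Fin n, z ≠ x ∧ z ≠ y := by
  by_contra h
  push_neg at h
  have hsub : (Finset.univ : Finset (Fin n)) ⊆ {x, y} := by
    intro z _
    simp only [Finset.mem_insert, Finset.mem_singleton]
    by_cases hz : z = x
    · exact Or.inl hz
    · exact Or.inr (h z hz)
  have hcard := Finset.card_le_card hsub
  rw [Finset.card_univ, Fintype.card_fin] at hcard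
  have h2 : ({x, y} : Finset (Fin n)).card ≤ 2 :=
    (Finset.card_insert_le _ _).trans (by simp)
  omega

lemma f0_nonconst (hn : 3 ≤ n) (hxy : x ≠ y) :
    ∃ u v : Fin n ⊕ Fin n, f0 x y u ≠ f0 x y v := by
  obtain ⟨z, hz1, hz2⟩ := exists_z hn hxy
  refine ⟨Sum.inl x, Sum.inl z, ?_⟩
  have e1 : f0 x y (Sum.inl x) = 0 := by simp [f0]
  have e2 : f0 x y (Sum.inl z) = 1 := by simp [f0, hz1, hz2]
  rw [e1, e2]
  decide

end Gp3


/-- For `n ≥ 3`, let `G = K_{n,n}` and let `G'` be obtained from `G` by adding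
one edge between two distinct vertices `x, y` of the first part.  Then `λ(G', K₂) < 1`,
while `λ(G, K₂) = 1`; in particular adding an edge can strictly decrease `λ(·, K₂)`. -/
theorem stmt_18 (n : ℕ) (hn : 3 ≤ n) (x y : Fin n) (hxy : x ≠ y)
    (G' : SimpleGraph (Fin n ⊕ Fin n))
    (hG' : G' = completeBipartiteGraph (Fin n) (Fin n) ⊔
        SimpleGraph.fromEdgeSet {s(Sum.inl x, Sum.inl y)}) :
    lam G' (fun a b : Fin 2 => ((⊤ : SimpleGraph (Fin 2)).dist a b : ℝ)) < 1 ∧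
    lam (completeBipartiteGraph (Fin n) (Fin n))
      (fun a b : Fin 2 => ((⊤ : SimpleGraph (Fin 2)).dist a b : ℝ)) = 1 := by
  constructor
  · refine lt_of_le_of_lt ?_ (Rf_G'_lt_one G' hn hxy hG')
    apply csInf_le
    · exact ⟨0, fun r hr => by obtain ⟨f, -, rfl⟩ := hr; exact Rf_nonneg _ f⟩
    · exact ⟨f0 x y, f0_nonconst hn hxy, rfl⟩
  · clear hG' G'
    apply le_antisymm
    · apply csInf_le
      · exact ⟨1, fun r hr => by obtain ⟨f, hf, rfl⟩ := hr; exact Rf_cb_ge hn f hf⟩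
      · exact ⟨f0 x y, f0_nonconst hn hxy, (Rf_cb_f0 hn hxy).symm⟩
    · apply le_csInf
      · exact ⟨1, f0 x y, f0_nonconst hn hxy, (Rf_cb_f0 hn hxy).symm⟩
      · exact fun r hr => by obtain ⟨f, hf, rfl⟩ := hr; exact Rf_cb_ge hn f hf
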